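/- Let (X,E) be a uniformly locally finite coarse space. For all ε, δ > 0 there is γ > 0 such that for all E, F ∈ E there is W ∈ E for which the following holds: if p, q, a ∈ B(ℓ₂(X)), where p is a projection and q is a rank-one projection, and supp(q) ⊆ E, ‖p − a‖ < γ, supp(a) ⊆ F, and ‖pq‖ ≥ δ, then p is (ε,W)-normed. -/

import Mathlib

noncomputable section

namespace RoePaper

open scoped InnerProductSpace ENNReal Classical

/-- `ℓ₂(X)`: the Hilbert space of square-summable complex functions on `X`. -/
abbrev l2 (X : Type*) := lp (fun _ : X => ℂ) 2

/-- Bounded operators on `ℓ₂(X)`. -/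
abbrev Bop (X : Type*) := l2 X →L[ℂ] l2 X

/-- The canonical orthonormal basis vector `δ_x` of `ℓ₂(X)`. -/
def delta {X : Type*} (x : X) : l2 X := lp.single 2 x 1

/-- The matrix entry `a_{x,z} = ⟨a δ_z, δ_x⟩` of an operator. -/
def entry {X : Type*} (a : Bop X) (x z : X) : ℂ := ⟪delta x, a (delta z)⟫_ℂ

/-- The (matrix) support of an operator. -/
def osupp {X : Type*} (a : Bop X) : Set (X × X) := {q : X × X | entry a q.1 q.2 ≠ 0}

theorem norm_indicator_apply_le {X : Type*} (A : Set X) (f : l2 X) (x : X) :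
    ‖A.indicator (⇑f) x‖ ≤ ‖f x‖ := by
  by_cases hx : x ∈ A <;> simp [Set.indicator_apply, hx]

theorem memℓp_indicator {X : Type*} (A : Set X) (f : l2 X) :
    Memℓp (A.indicator ⇑f) 2 := by
  have hf : Summable fun x => ‖f x‖ ^ (2 : ℝ≥0∞).toReal :=
    (lp.memℓp f).summable (by norm_num)
  refine memℓp_gen (hf.of_nonneg_of_le (fun x => by positivity) fun x => ?_)
  have h2 : (0:ℝ) ≤ (2 : ℝ≥0∞).toReal := by norm_num
  exact Real.rpow_le_rpow (norm_nonneg _) (norm_indicator_apply_le A f x) h2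

/-- The orthogonal projection of `ℓ₂(X)` onto `ℓ₂(A)`, i.e. (pointwise) multiplication by the
indicator function of `A ⊆ X`. -/
def chi {X : Type*} (A : Set X) : Bop X :=
  LinearMap.mkContinuous
    { toFun := fun f => (⟨A.indicator ⇑f, memℓp_indicator A f⟩ : l2 X)
      map_add' := by
        intro f g
        apply lp.ext
        simp only [lp.coeFn_add]
        exact Set.indicator_add A ⇑f ⇑g
      map_smul' := by
        intro c f
        apply lp.ext
        simp only [lp.coeFn_smul, RingHom.id_apply]
        exact Set.indicator_const_smul A c ⇑f }
    1
    (by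
      intro f
      rw [one_mul]
      refine lp.norm_le_of_forall_sum_le (by norm_num) (norm_nonneg _) fun s => ?_
      calc ∑ i ∈ s, ‖A.indicator (⇑f) i‖ ^ (2 : ℝ≥0∞).toReal
          ≤ ∑ i ∈ s, ‖f i‖ ^ (2 : ℝ≥0∞).toReal := by
            refine Finset.sum_le_sum fun i _ => ?_
            exact Real.rpow_le_rpow (norm_nonneg _) (norm_indicator_apply_le A f i) (by norm_num)
        _ ≤ ‖f‖ ^ (2 : ℝ≥0∞).toReal := lp.sum_rpow_le_norm_rpow (by norm_num) f s)

/-! ### Operator-theoretic notions -/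

variable {X Y : Type*}

/-- A (self-adjoint, idempotent) projection. Stated generically so that it applies both to
operators and to elements of abstract `*`-algebras. -/
def IsProjection {A : Type*} [Mul A] [Star A] (p : A) : Prop := star p = p ∧ p * p = p

/-- The rank of a continuous linear map: the dimension of its range. -/
def opRank {E F : Type*} [NormedAddCommGroup E] [NormedAddCommGroup F]
    [NormedSpace ℂ E] [NormedSpace ℂ F] (a : E →L[ℂ] F) : Cardinal :=
  Module.rank ℂ (LinearMap.range (a : E →ₗ[ℂ] F))

/-- A finite rank operator. -/
def FiniteRank {E F : Type*} [NormedAddCommGroup E] [NormedAddCommGroup F]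
    [NormedSpace ℂ E] [NormedSpace ℂ F] (a : E →L[ℂ] F) : Prop :=
  opRank a < Cardinal.aleph0

/-- A rank one operator. -/
def RankOne {E F : Type*} [NormedAddCommGroup E] [NormedAddCommGroup F]
    [NormedSpace ℂ E] [NormedSpace ℂ F] (a : E →L[ℂ] F) : Prop :=
  opRank a = 1

/-- A compact operator. -/
def CompactOp (a : Bop X) : Prop := IsCompactOperator ⇑a

/-- A ghost operator: its matrix entries vanish (up to `ε`) outside a finite set. -/
def IsGhost (a : Bop X) : Prop :=
  ∀ ε : ℝ, 0 < ε → ∃ A : Set X, A.Finite ∧ ∀ x z : X, x ∉ A → z ∉ A → ‖entry a x z‖ ≤ ε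

/-- `p = SOT-Σ_n χ_{X_n} p χ_{X_n}` for the pairwise disjoint sequence `(X_n)` of finite
nonempty subsets: the blocks `χ_{X_n} p χ_{X_n}` sum to `p` in the strong operator topology. -/
def IsBlockDecomp (p : Bop X) (Xn : ℕ → Set X) : Prop :=
  (∀ n, (Xn n).Finite ∧ (Xn n).Nonempty) ∧ Pairwise (Function.onFun Disjoint Xn) ∧
    ∀ ξ : l2 X, HasSum (fun n => (chi (Xn n) * p * chi (Xn n)) ξ) (p ξ)

/-- A block projection. -/
def IsBlockProjection (p : Bop X) : Prop :=
  IsProjection p ∧ ∃ Xn : ℕ → Set X, IsBlockDecomp p Xn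

/-- A block-rank-one projection. -/
def IsBlockRankOneProjection (p : Bop X) : Prop :=
  IsProjection p ∧ ∃ Xn : ℕ → Set X, IsBlockDecomp p Xn ∧
    ∀ n, RankOne (chi (Xn n) * p * chi (Xn n))

/-! ### Coarse spaces and their uniform Roe algebras -/

/-- A coarse structure on a set `X`. -/
structure CoarseStructure (X : Type*) where
  sets : Set (Set (X × X))
  diagonal_mem : {q : X × X | q.1 = q.2} ∈ sets
  mem_of_subset : ∀ ⦃E F : Set (X × X)⦄, E ∈ sets → F ⊆ E → F ∈ sets
  union_mem : ∀ ⦃E F : Set (X × X)⦄, E ∈ sets → F ∈ sets → E ∪ F ∈ sets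
  inv_mem : ∀ ⦃E : Set (X × X)⦄, E ∈ sets → {q : X × X | (q.2, q.1) ∈ E} ∈ sets
  comp_mem : ∀ ⦃E F : Set (X × X)⦄, E ∈ sets → F ∈ sets →
    {q : X × X | ∃ z, (q.1, z) ∈ E ∧ (z, q.2) ∈ F} ∈ sets

/-- A uniformly locally finite coarse space. -/
def CoarseStructure.ULF (𝓔 : CoarseStructure X) : Prop :=
  ∀ E ∈ 𝓔.sets, ∃ N : ℕ, ∀ x : X,
    {z : X | (x, z) ∈ E}.Finite ∧ {z : X | (x, z) ∈ E}.ncard ≤ N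

/-- A metrizable coarse structure: induced by some metric on `X`. -/
def CoarseStructure.Metrizable (𝓔 : CoarseStructure X) : Prop :=
  ∃ d : X → X → ℝ, (∀ x, d x x = 0) ∧ (∀ x y, d x y = 0 → x = y) ∧
    (∀ x y, d x y = d y x) ∧ (∀ x y z, d x z ≤ d x y + d y z) ∧
    𝓔.sets = {E : Set (X × X) | ∃ r : ℝ, ∀ q ∈ E, d q.1 q.2 ≤ r}

/-- The uniform Roe algebra of a coarse space: the norm closure of the operators with
controlled propagation. -/
def RoeC (𝓔 : CoarseStructure X) : Set (Bop X) :=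
  closure {a : Bop X | osupp a ∈ 𝓔.sets}

/-- An equi-approximable family of operators over a coarse space. -/
def EquiApproxC (𝓔 : CoarseStructure X) (S : Set (Bop X)) : Prop :=
  ∀ ε : ℝ, 0 < ε → ∃ E ∈ 𝓔.sets, ∀ a ∈ S, ∃ b : Bop X, osupp b ⊆ E ∧ ‖a - b‖ ≤ ε

/-- `a` is `(ε,E)`-normed: `‖a χ_A‖ ≥ (1-ε)‖a‖` for some `A` with `A × A ⊆ E`. -/
def IsNormed (a : Bop X) (ε : ℝ) (E : Set (X × X)) : Prop :=
  ∃ A : Set X, A ×ˢ A ⊆ E ∧ (1 - ε) * ‖a‖ ≤ ‖a * chi A‖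

/-- The operator norm localization property for the class `P` of operators, for a coarse
space. -/
def ONLForC (𝓔 : CoarseStructure X) (P : Bop X → Prop) : Prop :=
  ∀ ε : ℝ, 0 < ε → ∀ S : Set (Bop X), S ⊆ RoeC 𝓔 → (∀ a ∈ S, P a) → EquiApproxC 𝓔 S →
    ∃ E ∈ 𝓔.sets, ∀ a ∈ S, IsNormed a ε E

/-! ### Metric spaces and their uniform Roe algebras -/

/-- A uniformly locally finite metric space. -/
def ULFMetric (X : Type*) [MetricSpace X] : Prop :=
  ∀ r : ℝ, 0 < r → ∃ N : ℕ, ∀ x : X,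
    (Metric.closedBall x r).Finite ∧ (Metric.closedBall x r).ncard ≤ N

/-- The operator `a` has propagation at most `s`. -/
def HasPropLE [MetricSpace X] (a : Bop X) (s : ℝ) : Prop :=
  ∀ x z : X, entry a x z ≠ 0 → dist x z ≤ s

/-- The uniform Roe algebra of a metric space: the norm closure of the operators of finite
propagation. -/
def RoeM (X : Type*) [MetricSpace X] : Set (Bop X) :=
  closure {a : Bop X | ∃ s : ℝ, HasPropLE a s}

/-- An equi-approximable family of operators over a metric space. -/
def EquiApproxM [MetricSpace X] (S : Set (Bop X)) : Prop :=
  ∀ ε : ℝ, 0 < ε → ∃ s : ℝ, ∀ a ∈ S, ∃ b : Bop X, HasPropLE b s ∧ ‖a - b‖ ≤ ε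

/-- There is a unit vector `ξ` supported on a set of diameter at most `s` with
`‖a ξ‖ ≥ (1-ε)‖a‖`. -/
def IsVecNormed [MetricSpace X] (a : Bop X) (ε s : ℝ) : Prop :=
  ∃ ξ : l2 X, ‖ξ‖ = 1 ∧ (∀ x z : X, ξ x ≠ 0 → ξ z ≠ 0 → dist x z ≤ s) ∧
    (1 - ε) * ‖a‖ ≤ ‖a ξ‖

/-- The operator norm localization property for the class `P` of operators, for a metric
space. -/
def ONLForM (X : Type*) [MetricSpace X] (P : Bop X → Prop) : Prop :=
  ∀ ε : ℝ, 0 < ε → ∀ S : Set (Bop X), S ⊆ RoeM X → (∀ a ∈ S, P a) → EquiApproxM S →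
    ∃ s : ℝ, ∀ a ∈ S, IsVecNormed a ε s

/-- A sparse decomposition: `(X_n)` pairwise disjoint finite nonempty subsets with
`d(X_n, X_m) → ∞` as `n + m → ∞`. The corresponding sparse subspace is `⋃ n, X_n`. -/
def SparseSeq (X : Type*) [MetricSpace X] (Xn : ℕ → Set X) : Prop :=
  (∀ n, (Xn n).Finite ∧ (Xn n).Nonempty) ∧ Pairwise (Function.onFun Disjoint Xn) ∧
    ∀ r : ℝ, ∃ N : ℕ, ∀ m n : ℕ, m ≠ n → N ≤ m + n →
      ∀ x ∈ Xn m, ∀ z ∈ Xn n, r ≤ dist x z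

/-! ### Coarse maps -/

/-- A coarse map between coarse spaces. -/
def IsCoarseMap (𝓔 : CoarseStructure X) (𝓕 : CoarseStructure Y) (f : X → Y) : Prop :=
  ∀ E ∈ 𝓔.sets, ∃ F ∈ 𝓕.sets, ∀ q : X × X, q ∈ E → (f q.1, f q.2) ∈ F

/-- An expanding map between coarse spaces. -/
def IsExpandingMap (𝓔 : CoarseStructure X) (𝓕 : CoarseStructure Y) (f : X → Y) : Prop :=
  ∀ F ∈ 𝓕.sets, ∃ E ∈ 𝓔.sets, ∀ x z : X, (x, z) ∉ E → (f x, f z) ∉ F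

/-- A coarse embedding. -/
def IsCoarseEmbedding (𝓔 : CoarseStructure X) (𝓕 : CoarseStructure Y) (f : X → Y) : Prop :=
  IsCoarseMap 𝓔 𝓕 f ∧ IsExpandingMap 𝓔 𝓕 f

/-- A coarse equivalence. -/
def IsCoarseEquiv (𝓔 : CoarseStructure X) (𝓕 : CoarseStructure Y) (f : X → Y) : Prop :=
  IsCoarseEmbedding 𝓔 𝓕 f ∧ ∃ F ∈ 𝓕.sets, ∀ y : Y, ∃ x : X, (f x, y) ∈ F

/-- Two coarse spaces are coarsely equivalent. -/
def CoarselyEquivalent (𝓔 : CoarseStructure X) (𝓕 : CoarseStructure Y) : Prop :=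
  ∃ f : X → Y, IsCoarseEquiv 𝓔 𝓕 f

/-- A map is uniformly finite-to-one. -/
def UnifFiniteToOne (f : X → Y) : Prop :=
  ∃ N : ℕ, ∀ y : Y, (f ⁻¹' {y}).Finite ∧ (f ⁻¹' {y}).ncard ≤ N

/-! ### Morphisms given at the ambient level -/

/-- `Φ` (with inverse `Ψ`) is a `*`-isomorphism from the algebra `RX` of operators onto the
algebra `RY`. -/
def StarIsoOn (Φ : Bop X → Bop Y) (Ψ : Bop Y → Bop X)
    (RX : Set (Bop X)) (RY : Set (Bop Y)) : Prop :=
  Set.MapsTo Φ RX RY ∧ Set.MapsTo Ψ RY RX ∧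
    (∀ a ∈ RX, Ψ (Φ a) = a) ∧ (∀ b ∈ RY, Φ (Ψ b) = b) ∧
    (∀ a ∈ RX, ∀ b ∈ RX, Φ (a + b) = Φ a + Φ b) ∧
    (∀ a ∈ RX, ∀ b ∈ RX, Φ (a * b) = Φ a * Φ b) ∧
    (∀ c : ℂ, ∀ a ∈ RX, Φ (c • a) = c • Φ a) ∧
    (∀ a ∈ RX, Φ (star a) = star (Φ a))

/-- `Φ` is an embedding (injective `*`-homomorphism) of the algebra `RX` of operators into
the algebra `RY`. -/
def StarEmbeddingOn (Φ : Bop X → Bop Y) (RX : Set (Bop X)) (RY : Set (Bop Y)) : Prop :=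
  Set.MapsTo Φ RX RY ∧ Set.InjOn Φ RX ∧
    (∀ a ∈ RX, ∀ b ∈ RX, Φ (a + b) = Φ a + Φ b) ∧
    (∀ a ∈ RX, ∀ b ∈ RX, Φ (a * b) = Φ a * Φ b) ∧
    (∀ c : ℂ, ∀ a ∈ RX, Φ (c • a) = c • Φ a) ∧
    (∀ a ∈ RX, Φ (star a) = star (Φ a))

/-- `Φ` is strongly continuous: it maps bounded nets converging in the strong operator
topology to nets converging in the strong operator topology. -/
def StronglyContinuousOn (Φ : Bop X → Bop Y) (RX : Set (Bop X)) : Prop :=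
  ∀ (ι : Type) (l : Filter ι) (a : ι → Bop X) (b : Bop X),
    (∀ i, a i ∈ RX) → b ∈ RX → (∃ C : ℝ, ∀ i, ‖a i‖ ≤ C) →
    (∀ ξ : l2 X, Filter.Tendsto (fun i => (a i) ξ) l (nhds (b ξ))) →
    ∀ η : l2 Y, Filter.Tendsto (fun i => (Φ (a i)) η) l (nhds ((Φ b) η))

/-! ### Subalgebras, masas, Cartan masas (at the level of subsets of an ambient algebra) -/

section Algebraic

variable {A : Type*} [Ring A] [StarRing A] [Module ℂ A]

/-- `B` is a (not necessarily closed) `*`-subalgebra, as a subset of an ambient algebra. -/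
def StarSubalgSet (B : Set A) : Prop :=
  (∀ a ∈ B, ∀ b ∈ B, a + b ∈ B) ∧ (∀ a ∈ B, ∀ b ∈ B, a * b ∈ B) ∧
    (∀ c : ℂ, ∀ a ∈ B, c • a ∈ B) ∧ (∀ a ∈ B, star a ∈ B)

/-- A commutative set of operators. -/
def CommutativeSet (B : Set A) : Prop := ∀ a ∈ B, ∀ b ∈ B, a * b = b * a

/-- `B` is a maximal abelian self-adjoint subalgebra (masa) of `S`. -/
def IsMasaIn (B S : Set A) : Prop :=
  B ⊆ S ∧ StarSubalgSet B ∧ CommutativeSet B ∧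
    ∀ C : Set A, C ⊆ S → StarSubalgSet C → CommutativeSet C → B ⊆ C → C = B

/-- The normalizer of `B` inside `S`. -/
def NormalizerIn (B S : Set A) : Set A :=
  {a ∈ S | ∀ b ∈ B, a * b * star a ∈ B ∧ star a * b * a ∈ B}

/-- `S` is generated, as a C*-algebra, by its subset `G`: every norm-closed
`*`-subalgebra of `S` containing `G` is all of `S`. -/
def GeneratesIn [TopologicalSpace A] (G S : Set A) : Prop :=
  ∀ C : Set A, C ⊆ S → StarSubalgSet C → IsClosed C → G ⊆ C → S ⊆ C

/-- `Υ` is a completely positive map on `S`: for every matrix `x` over `S`, the entrywise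
image under `Υ` of the positive matrix `x* x` is positive. -/
def IsCPOn (S : Set A) (Υ : A → A) : Prop :=
  ∀ n : ℕ, ∀ x : Matrix (Fin n) (Fin n) A, (∀ i j, x i j ∈ S) →
    ∃ y : Matrix (Fin n) (Fin n) A, (star x * x).map Υ = star y * y

/-- `Υ` is a faithful conditional expectation of `S` onto `B`. -/
def FaithfulCondExp (B S : Set A) (Υ : A → A) : Prop :=
  (∀ a ∈ S, Υ a ∈ B) ∧
    (∀ a ∈ S, ∀ b ∈ S, Υ (a + b) = Υ a + Υ b) ∧
    (∀ c : ℂ, ∀ a ∈ S, Υ (c • a) = c • Υ a) ∧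
    IsCPOn S Υ ∧
    (∀ b₁ ∈ B, ∀ b₂ ∈ B, ∀ a ∈ S, Υ (b₁ * a * b₂) = b₁ * Υ a * b₂) ∧
    (∀ a ∈ S, Υ (star a * a) = 0 → a = 0)

/-- `B` is a Cartan masa in `S`. -/
def IsCartanMasaIn [TopologicalSpace A] (B S : Set A) : Prop :=
  IsMasaIn B S ∧ GeneratesIn (NormalizerIn B S) S ∧ ∃ Υ : A → A, FaithfulCondExp B S Υ

/-- `B` is co-separable in `S`: `S` is generated, as a C*-algebra, by `B` together with a
countable set. -/
def CoSeparableIn [TopologicalSpace A] (B S : Set A) : Prop :=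
  ∃ T : Set A, T.Countable ∧ T ⊆ S ∧ GeneratesIn (B ∪ T) S

/-- The bounded complex functions on `Z`, i.e. `ℓ∞(Z)` with its pointwise `*`-algebra
structure. -/
def BddFuns (Z : Type*) : Set (Z → ℂ) := {f | ∃ C : ℝ, ∀ z, ‖f z‖ ≤ C}

/-- `B` is `*`-isomorphic to `ℓ∞(Z)`. -/
def IsoToLinf (B : Set A) (Z : Type*) : Prop :=
  ∃ e : A → (Z → ℂ), Set.BijOn e B (BddFuns Z) ∧
    (∀ a ∈ B, ∀ b ∈ B, e (a + b) = e a + e b) ∧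
    (∀ a ∈ B, ∀ b ∈ B, e (a * b) = e a * e b) ∧
    (∀ c : ℂ, ∀ a ∈ B, e (c • a) = c • e a) ∧
    (∀ a ∈ B, e (star a) = star (e a))

end Algebraic

/-- The diagonal operators on `ℓ₂(X)`; this is the canonical copy of `ℓ∞(X)` inside the
uniform Roe algebra. -/
def DiagSet (X : Type*) : Set (Bop X) := {a : Bop X | ∀ x z : X, x ≠ z → entry a x z = 0}

/-- `B` is a hereditary subalgebra of `S`: `b ∈ B`, `a ∈ S`, `0 ≤ a ≤ b` imply `a ∈ B`. -/
def HereditaryIn {X : Type*} (B S : Set (Bop X)) : Prop :=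
  ∀ b ∈ B, ∀ a ∈ S, a.IsPositive → (b - a).IsPositive → a ∈ B


section Aux

variable {X : Type*}

lemma delta_inner (f : l2 X) (x : X) : ⟪delta x, f⟫_ℂ = f x := by
  simp [delta, lp.inner_single_left, RCLike.inner_apply]

lemma chi_coe (A : Set X) (f : l2 X) : ⇑(chi A f) = A.indicator ⇑f := rfl

lemma norm_chi_le (A : Set X) : ‖(chi A : Bop X)‖ ≤ 1 :=
  LinearMap.mkContinuous_norm_le _ zero_le_one _

lemma star_chi (A : Set X) : star (chi A : Bop X) = chi A := by
  rw [ContinuousLinearMap.star_eq_adjoint]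
  symm
  rw [ContinuousLinearMap.eq_adjoint_iff]
  intro f g
  rw [lp.inner_eq_tsum, lp.inner_eq_tsum]
  refine tsum_congr fun x => ?_
  simp only [RCLike.inner_apply, chi_coe]
  by_cases hx : x ∈ A <;> simp [Set.indicator_apply, hx]

/-- If all relevant matrix entries vanish the coordinate of `a ξ` vanishes. -/
lemma apply_coord_zero (a : Bop X) (ξ : l2 X) (x : X)
    (h : ∀ z, entry a x z * ξ z = 0) : (a ξ) x = 0 := by
  have h1 : HasSum (fun z : X => lp.single 2 z (ξ z)) ξ := lp.hasSum_single (by norm_num) ξ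
  have h2 : HasSum (fun z : X => ((innerSL ℂ (delta x)).comp a) (lp.single 2 z (ξ z)))
      (((innerSL ℂ (delta x)).comp a) ξ) := h1.mapL _
  have h3 : ∀ z : X, ((innerSL ℂ (delta x)).comp a) (lp.single 2 z (ξ z)) = 0 := by
    intro z
    have hz : lp.single 2 z (ξ z) = ξ z • delta z := by
      rw [delta, ← lp.single_smul]
      norm_num
    simp only [ContinuousLinearMap.comp_apply, innerSL_apply_apply, hz, map_smul,
      inner_smul_right]
    rw [smul_eq_mul, mul_comm]
    exact h z
  have h4 : (((innerSL ℂ (delta x)).comp a) ξ) = 0 := h2.unique (by simpa [h3] using hasSum_zero)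
  have h5 : ⟪delta x, a ξ⟫_ℂ = 0 := h4
  rwa [delta_inner] at h5

end Aux


set_option maxHeartbeats 1000000 in
set_option synthInstance.maxHeartbeats 400000 in
/-- A rank-one projection is given by a unit vector. -/
lemma rankOne_proj_exists_vec {X : Type*} {q : Bop X} (hq : IsProjection q)
    (hq1 : RankOne q) : ∃ ξ : l2 X, ‖ξ‖ = 1 ∧ ∀ v : l2 X, q v = ⟪ξ, v⟫_ℂ • ξ := by
  letI : Module.Free ℂ ↥(LinearMap.range (q : l2 X →ₗ[ℂ] l2 X)) := inferInstance
  have hrank : Module.rank ℂ (LinearMap.range (q : l2 X →ₗ[ℂ] l2 X)) = 1 := hq1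
  obtain ⟨v₀, hv₀ne, hv₀⟩ := rank_eq_one_iff.mp hrank
  obtain ⟨w, hw⟩ := LinearMap.mem_range.mp v₀.2
  have hξ0ne : (v₀ : l2 X) ≠ 0 := fun h => hv₀ne (Subtype.ext h)
  have hnξ0 : (0:ℝ) < ‖(v₀ : l2 X)‖ := norm_pos_iff.mpr hξ0ne
  have hC : (‖(v₀ : l2 X)‖ : ℂ) ≠ 0 := by exact_mod_cast hnξ0.ne'
  have hqξ0 : q (v₀ : l2 X) = (v₀ : l2 X) := by
    rw [← hw, ContinuousLinearMap.coe_coe, ← ContinuousLinearMap.mul_apply, hq.2]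
  have hadj : ∀ v : l2 X, ⟪(v₀ : l2 X), q v⟫_ℂ = ⟪(v₀ : l2 X), v⟫_ℂ := by
    intro v
    have h1 : ContinuousLinearMap.adjoint q = q := by
      rw [← ContinuousLinearMap.star_eq_adjoint]; exact hq.1
    rw [← ContinuousLinearMap.adjoint_inner_left, h1, hqξ0]
  refine ⟨((‖(v₀ : l2 X)‖⁻¹ : ℝ) : ℂ) • (v₀ : l2 X), ?_, ?_⟩
  · rw [norm_smul, Complex.norm_real, Real.norm_eq_abs, abs_inv, abs_of_pos hnξ0,
      inv_mul_cancel₀ hnξ0.ne']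
  · intro v
    obtain ⟨c, hc⟩ := hv₀ ⟨q v, ⟨v, rfl⟩⟩
    have hc' : c • (v₀ : l2 X) = q v := congrArg Subtype.val hc
    have h2 : ⟪(v₀ : l2 X), q v⟫_ℂ = c * (‖(v₀ : l2 X)‖ : ℂ) ^ 2 := by
      rw [← hc', inner_smul_right, inner_self_eq_norm_sq_to_K]
      rfl
    have h4 : ⟪(v₀ : l2 X), v⟫_ℂ = c * (‖(v₀ : l2 X)‖ : ℂ) ^ 2 := (hadj v).symm.trans h2
    have h3 : c = ⟪(v₀ : l2 X), v⟫_ℂ / (‖(v₀ : l2 X)‖ : ℂ) ^ 2 := by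
      rw [h4, mul_div_assoc, div_self (pow_ne_zero 2 hC), mul_one]
    rw [← hc', h3, inner_smul_left, smul_smul]
    congr 1
    rw [Complex.conj_ofReal]
    push_cast
    rw [div_eq_mul_inv, pow_two, mul_inv]
    ring

set_option maxHeartbeats 1000000 in
/-- Let `(X,𝓔)` be a uniformly locally finite coarse space. For all
`ε, δ > 0` there is `γ > 0` such that for all `E, F ∈ 𝓔` there is `W ∈ 𝓔` for which the
following holds: if `p, q, a ∈ B(ℓ₂(X))` where `p` is a projection and `q` is a rank-one
projection, and `supp(q) ⊆ E`, `‖p − a‖ < γ`, `supp(a) ⊆ F`, and `‖pq‖ ≥ δ`, then `p` is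
`(ε,W)`-normed. -/
theorem stmt_8 {X : Type*} (𝓔 : CoarseStructure X) (hulf : 𝓔.ULF) :
    ∀ ε δ : ℝ, 0 < ε → 0 < δ → ∃ γ : ℝ, 0 < γ ∧
      ∀ E ∈ 𝓔.sets, ∀ F ∈ 𝓔.sets, ∃ W ∈ 𝓔.sets,
        ∀ p q a : Bop X, IsProjection p → IsProjection q → RankOne q →
          osupp q ⊆ E → ‖p - a‖ < γ → osupp a ⊆ F → δ ≤ ‖p * q‖ →
          IsNormed p ε W := by
  intro ε δ hε hδ
  refine ⟨δ * ε / 2, by positivity, fun E hE F hF => ?_⟩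
  refine ⟨{w : X × X | ∃ z', (w.1, z') ∈ {u : X × X | ∃ z, (u.1, z) ∈ F ∧ (z, u.2) ∈ E} ∧
      (z', w.2) ∈ {u : X × X | (u.2, u.1) ∈ F}},
    𝓔.comp_mem (𝓔.comp_mem hF hE) (𝓔.inv_mem hF), ?_⟩
  intro p q a hp hq hq1 hqE hpa haF hpq
  obtain ⟨ξ, hξnorm, hqv⟩ := rankOne_proj_exists_vec hq hq1
  -- the support of ξ is E-controlled
  have hSprod : ∀ x z : X, ξ x ≠ 0 → ξ z ≠ 0 → (x, z) ∈ E := by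
    intro x z hx hz
    apply hqE
    show entry q x z ≠ 0
    show ⟪delta x, q (delta z)⟫_ℂ ≠ 0
    rw [hqv (delta z), inner_smul_right, delta_inner]
    have h5 : ⟪ξ, delta z⟫_ℂ = (starRingEnd ℂ) (ξ z) := by
      rw [← delta_inner ξ z, inner_conj_symm]
    rw [h5]
    simp only [ne_eq, mul_eq_zero, map_eq_zero, not_or]
    exact ⟨hz, hx⟩
  -- δ ≤ ‖p ξ‖
  have hpq_le : ‖p * q‖ ≤ ‖p ξ‖ := by
    refine ContinuousLinearMap.opNorm_le_bound _ (norm_nonneg _) fun v => ?_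
    rw [ContinuousLinearMap.mul_apply, hqv v, map_smul, norm_smul]
    calc ‖⟪ξ, v⟫_ℂ‖ * ‖p ξ‖ ≤ (‖ξ‖ * ‖v‖) * ‖p ξ‖ := by
          gcongr; exact norm_inner_le_norm _ _
      _ = ‖p ξ‖ * ‖v‖ := by rw [hξnorm]; ring
  have hr : δ ≤ ‖p ξ‖ := le_trans hpq hpq_le
  have hr0 : (0:ℝ) < ‖p ξ‖ := lt_of_lt_of_le hδ hr
  have hpne : p ≠ 0 := by
    intro h
    rw [h] at hr0
    simp at hr0
  have hpnorm : ‖p‖ = 1 := by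
    have h1 : ‖p‖ * ‖p‖ = ‖p‖ := by rw [← CStarRing.norm_star_mul_self, hp.1, hp.2]
    have h2 : ‖p‖ ≠ 0 := norm_ne_zero_iff.mpr hpne
    exact mul_right_cancel₀ h2 (by linarith)
  -- the witnessing set A
  refine ⟨{x : X | ∃ z, ξ z ≠ 0 ∧ (x, z) ∈ F}, ?_, ?_⟩
  · rintro ⟨x, x'⟩ ⟨⟨z, hz, hxz⟩, ⟨z', hz', hx'z'⟩⟩
    exact ⟨z', ⟨z, hxz, hSprod z z' hz hz'⟩, hx'z'⟩
  set A : Set X := {x : X | ∃ z, ξ z ≠ 0 ∧ (x, z) ∈ F} with hAdef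
  -- a ξ is supported in A
  have hchiaξ : chi A (a ξ) = a ξ := by
    apply lp.ext
    rw [chi_coe]
    funext x
    by_cases hx : x ∈ A
    · exact Set.indicator_of_mem hx _
    · rw [Set.indicator_of_notMem hx]
      symm
      apply apply_coord_zero
      intro z
      by_cases hz : ξ z = 0
      · rw [hz, mul_zero]
      · have hzF : (x, z) ∉ F := fun hmem => hx ⟨z, hz, hmem⟩
        have : entry a x z = 0 := by
          by_contra hne
          exact hzF (haF hne)
        rw [this, zero_mul]
  have hpaξ : ‖(p - a) ξ‖ ≤ δ * ε / 2 :=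
    calc ‖(p - a) ξ‖ ≤ ‖p - a‖ * ‖ξ‖ := (p - a).le_opNorm ξ
      _ = ‖p - a‖ := by rw [hξnorm, mul_one]
      _ ≤ δ * ε / 2 := hpa.le
  have haξ : ‖p ξ‖ - δ * ε / 2 ≤ ‖a ξ‖ := by
    have h6 : ‖p ξ - a ξ‖ ≤ δ * ε / 2 := by
      simpa [ContinuousLinearMap.sub_apply] using hpaξ
    have h7 := norm_sub_norm_le (p ξ) (a ξ)
    linarith
  have hchipξ : ‖p ξ‖ - δ * ε ≤ ‖chi A (p ξ)‖ := by
    have hsplit : chi A (p ξ) = a ξ + chi A ((p - a) ξ) := by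
      have h8 : p ξ = a ξ + (p - a) ξ := by
        simp [ContinuousLinearMap.sub_apply]
      rw [h8, map_add, hchiaξ]
    rw [hsplit]
    have h9 : ‖chi A ((p - a) ξ)‖ ≤ δ * ε / 2 :=
      calc ‖chi A ((p - a) ξ)‖ ≤ ‖(chi A : Bop X)‖ * ‖(p - a) ξ‖ := (chi A).le_opNorm _
        _ ≤ 1 * (δ * ε / 2) :=
            mul_le_mul (norm_chi_le A) hpaξ (norm_nonneg _) zero_le_one
        _ = δ * ε / 2 := one_mul _
    have h10 : ‖a ξ‖ ≤ ‖a ξ + chi A ((p - a) ξ)‖ + ‖chi A ((p - a) ξ)‖ := by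
      simpa [add_sub_cancel_right] using
        norm_sub_le (a ξ + chi A ((p - a) ξ)) (chi A ((p - a) ξ))
    linarith
  -- the key norm bound
  set r : ℝ := ‖p ξ‖ with hrdef
  have hkey : r⁻¹ * (r - δ * ε) ≤ ‖chi A * p‖ := by
    have hvnorm : ‖((r⁻¹ : ℝ) : ℂ) • (p ξ)‖ = 1 := by
      rw [norm_smul, Complex.norm_real, Real.norm_eq_abs, abs_inv, abs_of_pos hr0,
        ← hrdef, inv_mul_cancel₀ hr0.ne']
    have happ : (chi A * p) (((r⁻¹ : ℝ) : ℂ) • (p ξ)) = ((r⁻¹ : ℝ) : ℂ) • chi A (p ξ) := by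
      rw [map_smul]
      congr 1
      rw [ContinuousLinearMap.mul_apply, ← ContinuousLinearMap.mul_apply p p, hp.2]
    have h1 : ‖(chi A * p) (((r⁻¹ : ℝ) : ℂ) • (p ξ))‖ ≤ ‖chi A * p‖ :=
      calc ‖(chi A * p) (((r⁻¹ : ℝ) : ℂ) • (p ξ))‖
          ≤ ‖chi A * p‖ * ‖((r⁻¹ : ℝ) : ℂ) • (p ξ)‖ := (chi A * p).le_opNorm _
        _ = ‖chi A * p‖ := by rw [hvnorm, mul_one]
    have h2 : r⁻¹ * (r - δ * ε) ≤ ‖(chi A * p) (((r⁻¹ : ℝ) : ℂ) • (p ξ))‖ := by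
      rw [happ, norm_smul, Complex.norm_real, Real.norm_eq_abs, abs_inv, abs_of_pos hr0]
      exact mul_le_mul_of_nonneg_left hchipξ (inv_nonneg.mpr hr0.le)
    linarith
  have hfinal : 1 - ε ≤ ‖chi A * p‖ := by
    have h11 : 1 - ε ≤ r⁻¹ * (r - δ * ε) := by
      rw [mul_sub, inv_mul_cancel₀ hr0.ne']
      have h12 : r⁻¹ * (δ * ε) ≤ δ⁻¹ * (δ * ε) := by
        gcongr
      have h13 : δ⁻¹ * (δ * ε) = ε := by field_simp
      linarith
    linarith
  have hns : ‖p * chi A‖ = ‖chi A * p‖ := by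
    rw [← norm_star (p * chi A), star_mul, star_chi, hp.1]
  rw [hpnorm, mul_one, hns]
  exact hfinal


end RoePaper
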